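/- Let R be a (possibly noncommutative) ring, let K₁, K₂, m ≥ 1 and X ≥ 0 be integers, and let q_A, q_B be the column-ordered secure encoding polynomials over R built from elements A_{j,k}, B_{j,k}, R_i, T_i. Set k = (K₂+1)(K₁m+X) − 1 − K₁(m−1). Then for every 1 ≤ j ≤ K₁ and 1 ≤ k' ≤ K₂, the coefficient of x^{(m−1)K₁+(j−1)+(k'−1)(K₁m+X)} in the remainder of q_A(x)·q_B(x) upon division by x^k − 1 equals Σ_{i=1}^{m} A_{j,i}·B_{i,k'}. -/

import Mathlib

open Polynomial Finset

/-- The column-ordered secure encoding polynomial of `A` (Section IV-A-2), with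
0-based indices; `Xs` is the security parameter. -/
noncomputable def colA {R : Type*} [Ring R] (K₁ m Xs : ℕ)
    (A : Fin K₁ → Fin m → R) (Rn : Fin Xs → R) : R[X] :=
  (∑ j : Fin K₁, ∑ k : Fin m, monomial (k.val * K₁ + j.val) (A j k))
    + ∑ i : Fin Xs, monomial (K₁ * m + i.val) (Rn i)

/-- The column-ordered secure encoding polynomial of `B` (Section IV-A-2), with
0-based indices. -/
noncomputable def colB {R : Type*} [Ring R] (K₁ K₂ m Xs : ℕ)
    (B : Fin m → Fin K₂ → R) (T : Fin Xs → R) : R[X] :=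
  (∑ j : Fin m, ∑ k : Fin K₂, monomial ((m - 1 - j.val) * K₁ + k.val * (K₁ * m + Xs)) (B j k))
    + ∑ i : Fin Xs, monomial ((K₂ - 1) * (K₁ * m + Xs) + K₁ * m + i.val) (T i)

/-- Theorem 3: reducing the product of the column-ordered secure encoding polynomials
modulo `x^k - 1` with `k = (K₂+1)(K₁m+Xs) - 1 - K₁(m-1)` preserves all the desired
block coefficients `C_{j,k'} = Σ_i A_{j,i} B_{i,k'}`. -/
lemma key (S u v a b : ℕ) (ha : a < S) (hb : b < S)
    (h : u * S + a = v * S + b) : u = v ∧ a = b := by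
  have hS : 0 < S := by omega
  have h1 : (u * S + a) % S = a := by
    rw [mul_comm, Nat.mul_add_mod, Nat.mod_eq_of_lt ha]
  have h2 : (v * S + b) % S = b := by
    rw [mul_comm, Nat.mul_add_mod, Nat.mod_eq_of_lt hb]
  have hab : a = b := by rw [← h1, h, h2]
  subst hab
  have : u * S = v * S := by omega
  exact ⟨Nat.eq_of_mul_eq_mul_right hS this, rfl⟩

lemma key2 (S u v a b : ℕ) (ha : a < 2 * S) (hb : b < S)
    (h : u * S + a = v * S + b) :
    (u = v ∧ a = b) ∨ (u + 1 = v ∧ a = b + S) := by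
  rcases lt_or_ge a S with h' | h'
  · exact Or.inl (key S u v a b h' hb h)
  · have h2 : (u + 1) * S + (a - S) = v * S + b := by
      rw [add_mul, one_mul]; omega
    obtain ⟨h3, h4⟩ := key S (u + 1) v (a - S) b (by omega) hb h2
    exact Or.inr ⟨h3, by omega⟩

lemma coeff_prod_eq {R : Type*} [Ring R] (K₁ K₂ m Xs : ℕ)
    (hK₁ : 1 ≤ K₁) (hK₂ : 1 ≤ K₂) (hm : 1 ≤ m)
    (A : Fin K₁ → Fin m → R) (B : Fin m → Fin K₂ → R)
    (Rn : Fin Xs → R) (T : Fin Xs → R)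
    (j : Fin K₁) (k' : Fin K₂) :
    (colA K₁ m Xs A Rn * colB K₁ K₂ m Xs B T).coeff
        ((m - 1) * K₁ + j.val + k'.val * (K₁ * m + Xs))
      = ∑ i : Fin m, A j i * B i k' := by
  have hE : (m - 1) * K₁ + K₁ = K₁ * m := by
    obtain ⟨m', rfl⟩ : ∃ m', m = m' + 1 := ⟨m - 1, by omega⟩
    rw [Nat.add_sub_cancel, Nat.mul_add, Nat.mul_one, Nat.mul_comm]
  -- main condition
  have hcond : ∀ (x : Fin m) (x_1 : Fin K₂) (x_2 : Fin K₁) (x_3 : Fin m),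
      (↑x_3 * K₁ + ↑x_2 + ((m - 1 - ↑x) * K₁ + (↑x_1 * (K₁ * m) + ↑x_1 * Xs)) =
        (m - 1) * K₁ + ↑j + (↑k' * (K₁ * m) + ↑k' * Xs))
      ↔ (x_3 = x ∧ x_2 = j ∧ x_1 = k') := by
    intro x x_1 x_2 x_3
    have e1 := mul_add (x_1 : ℕ) (K₁ * m) Xs
    have e2 := mul_add (k' : ℕ) (K₁ * m) Xs
    have b1 : (x_3 : ℕ) * K₁ ≤ (m - 1) * K₁ :=
      Nat.mul_le_mul_right _ (by have := x_3.isLt; omega)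
    have b2 : (m - 1 - (x : ℕ)) * K₁ ≤ (m - 1) * K₁ :=
      Nat.mul_le_mul_right _ (by omega)
    constructor
    · intro h
      have h' : (x_1 : ℕ) * (K₁ * m + Xs) + (↑x_3 * K₁ + ↑x_2 + (m - 1 - ↑x) * K₁)
          = (k' : ℕ) * (K₁ * m + Xs) + ((m - 1) * K₁ + ↑j) := by omega
      have hj := j.isLt
      have hx2 := x_2.isLt
      rcases key2 _ _ _ _ _ (by omega) (by omega) h' with ⟨hq, hr⟩ | ⟨hq, hr⟩
      · have h'' : ((x_3 : ℕ) + (m - 1 - ↑x)) * K₁ + ↑x_2 = (m - 1) * K₁ + ↑j := by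
          rw [add_mul]; omega
        obtain ⟨hs, ht⟩ := key K₁ _ _ _ _ hx2 hj h''
        have hx := x.isLt
        have hx3 := x_3.isLt
        exact ⟨Fin.ext (by omega), Fin.ext ht, Fin.ext hq⟩
      · omega
    · rintro ⟨rfl, rfl, rfl⟩
      have : (x_3 : ℕ) * K₁ + (m - 1 - ↑x_3) * K₁ = (m - 1) * K₁ := by
        rw [← add_mul]; congr 1; have := x_3.isLt; omega
      omega
  have hR : ∀ (x : Fin m) (x_1 : Fin K₂) (x_2 : Fin Xs),
      (K₁ * m + ↑x_2 + ((m - 1 - ↑x) * K₁ + (↑x_1 * (K₁ * m) + ↑x_1 * Xs)) =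
        (m - 1) * K₁ + ↑j + (↑k' * (K₁ * m) + ↑k' * Xs)) ↔ False := by
    intro x x_1 x_2
    simp only [iff_false]
    intro h
    have e1 := mul_add (x_1 : ℕ) (K₁ * m) Xs
    have e2 := mul_add (k' : ℕ) (K₁ * m) Xs
    have b2 : (m - 1 - (x : ℕ)) * K₁ ≤ (m - 1) * K₁ :=
      Nat.mul_le_mul_right _ (by omega)
    have hj := j.isLt
    have hx2 := x_2.isLt
    have h' : (x_1 : ℕ) * (K₁ * m + Xs) + (K₁ * m + ↑x_2 + (m - 1 - ↑x) * K₁)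
        = (k' : ℕ) * (K₁ * m + Xs) + ((m - 1) * K₁ + ↑j) := by omega
    rcases key2 _ _ _ _ _ (by omega) (by omega) h' with ⟨hq, hr⟩ | ⟨hq, hr⟩ <;> omega
  have hAT : ∀ (x : Fin Xs) (x_1 : Fin K₁) (x_2 : Fin m),
      (↑x_2 * K₁ + ↑x_1 + ((K₂ - 1) * (K₁ * m) + (K₂ - 1) * Xs + K₁ * m + ↑x) =
        (m - 1) * K₁ + ↑j + (↑k' * (K₁ * m) + ↑k' * Xs)) ↔ False := by
    intro x x_1 x_2
    simp only [iff_false]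
    intro h
    have e1 := mul_add (K₂ - 1) (K₁ * m) Xs
    have e2 := mul_add (k' : ℕ) (K₁ * m) Xs
    have b1 : (x_2 : ℕ) * K₁ ≤ (m - 1) * K₁ :=
      Nat.mul_le_mul_right _ (by have := x_2.isLt; omega)
    have hj := j.isLt
    have hx1 := x_1.isLt
    have hx := x.isLt
    have hk'2 := k'.isLt
    have h' : (K₂ - 1) * (K₁ * m + Xs) + (↑x_2 * K₁ + ↑x_1 + K₁ * m + ↑x)
        = (k' : ℕ) * (K₁ * m + Xs) + ((m - 1) * K₁ + ↑j) := by omega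
    rcases key2 _ _ _ _ _ (by omega) (by omega) h' with ⟨hq, hr⟩ | ⟨hq, hr⟩ <;> omega
  have hRT : ∀ (x : Fin Xs) (x_1 : Fin Xs),
      (K₁ * m + ↑x_1 + ((K₂ - 1) * (K₁ * m) + (K₂ - 1) * Xs + K₁ * m + ↑x) =
        (m - 1) * K₁ + ↑j + (↑k' * (K₁ * m) + ↑k' * Xs)) ↔ False := by
    intro x x_1
    simp only [iff_false]
    intro h
    have e1 := mul_add (K₂ - 1) (K₁ * m) Xs
    have e2 := mul_add (k' : ℕ) (K₁ * m) Xs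
    have hj := j.isLt
    have hx1 := x_1.isLt
    have hx := x.isLt
    have hk'2 := k'.isLt
    have h' : (K₂ - 1) * (K₁ * m + Xs) + (K₁ * m + ↑x_1 + K₁ * m + ↑x)
        = (k' : ℕ) * (K₁ * m + Xs) + ((m - 1) * K₁ + ↑j) := by omega
    rcases key2 _ _ _ _ _ (by omega) (by omega) h' with ⟨hq, hr⟩ | ⟨hq, hr⟩ <;> omega
  simp only [colA, colB, add_mul, mul_add, coeff_add, Finset.sum_mul, Finset.mul_sum,
    monomial_mul_monomial, finset_sum_coeff, coeff_monomial]
  simp only [hcond, hR, hAT, hRT, if_false]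
  simp [ite_and, Finset.sum_ite_eq']

theorem stmt_8 {R : Type*} [Ring R] (K₁ K₂ m Xs : ℕ)
    (hK₁ : 1 ≤ K₁) (hK₂ : 1 ≤ K₂) (hm : 1 ≤ m)
    (A : Fin K₁ → Fin m → R) (B : Fin m → Fin K₂ → R)
    (Rn : Fin Xs → R) (T : Fin Xs → R)
    (k : ℕ) (hk : k = (K₂ + 1) * (K₁ * m + Xs) - 1 - K₁ * (m - 1))
    (j : Fin K₁) (k' : Fin K₂) :
    ((colA K₁ m Xs A Rn * colB K₁ K₂ m Xs B T) %ₘ (X ^ k - 1)).coeff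
        ((m - 1) * K₁ + j.val + k'.val * (K₁ * m + Xs))
      = ∑ i : Fin m, A j i * B i k' := by
  nontriviality R
  set p := colA K₁ m Xs A Rn * colB K₁ K₂ m Xs B T with hp
  set n := (m - 1) * K₁ + j.val + k'.val * (K₁ * m + Xs) with hn
  have hE : (m - 1) * K₁ + K₁ = K₁ * m := by
    obtain ⟨m', rfl⟩ : ∃ m', m = m' + 1 := ⟨m - 1, by omega⟩
    rw [Nat.add_sub_cancel, Nat.mul_add, Nat.mul_one, Nat.mul_comm]
  have hE2 : K₁ * (m - 1) + K₁ = K₁ * m := by rw [mul_comm K₁ (m-1)] at *; exact hE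
  have hQ : (K₂ + 1) * (K₁ * m + Xs) = K₂ * (K₁ * m + Xs) + (K₁ * m + Xs) := by
    rw [add_mul, one_mul]
  have hkk : k = K₂ * (K₁ * m + Xs) + Xs + K₁ - 1 := by omega
  have hk1 : 1 ≤ k := by
    have : K₁ * m ≤ K₂ * (K₁ * m + Xs) :=
      le_trans (Nat.le_add_right _ _) (Nat.le_mul_of_pos_left _ (by omega))
    omega
  have hF : k'.val * (K₁ * m + Xs) + (K₁ * m + Xs) ≤ K₂ * (K₁ * m + Xs) := by
    have : (k'.val + 1) * (K₁ * m + Xs) ≤ K₂ * (K₁ * m + Xs) :=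
      Nat.mul_le_mul_right _ (by have := k'.isLt; omega)
    rwa [add_mul, one_mul] at this
  have hj := j.isLt
  have hnk : n < k := by omega
  -- degree bounds
  have hdA : (colA K₁ m Xs A Rn).natDegree ≤ K₁ * m + Xs - 1 := by
    unfold colA
    refine natDegree_add_le_of_degree_le ?_ ?_ <;>
      refine natDegree_sum_le_of_forall_le _ _ fun i _ => ?_
    · refine natDegree_sum_le_of_forall_le _ _ fun l _ => ?_
      refine le_trans (natDegree_monomial_le _) ?_
      have : (l : ℕ) * K₁ ≤ (m - 1) * K₁ :=
        Nat.mul_le_mul_right _ (by have := l.isLt; omega)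
      have := i.isLt; omega
    · refine le_trans (natDegree_monomial_le _) ?_
      have := i.isLt; omega
  have hdB : (colB K₁ K₂ m Xs B T).natDegree ≤ K₂ * (K₁ * m + Xs) - 1 := by
    unfold colB
    refine natDegree_add_le_of_degree_le ?_ ?_ <;>
      refine natDegree_sum_le_of_forall_le _ _ fun i _ => ?_
    · refine natDegree_sum_le_of_forall_le _ _ fun l _ => ?_
      refine le_trans (natDegree_monomial_le _) ?_
      have h1 : (m - 1 - (i : ℕ)) * K₁ ≤ (m - 1) * K₁ :=
        Nat.mul_le_mul_right _ (by omega)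
      have h2 : (l : ℕ) * (K₁ * m + Xs) + (K₁ * m + Xs) ≤ K₂ * (K₁ * m + Xs) := by
        have : ((l : ℕ) + 1) * (K₁ * m + Xs) ≤ K₂ * (K₁ * m + Xs) :=
          Nat.mul_le_mul_right _ (by have := l.isLt; omega)
        rwa [add_mul, one_mul] at this
      omega
    · refine le_trans (natDegree_monomial_le _) ?_
      have h1 : (K₂ - 1) * (K₁ * m + Xs) + (K₁ * m + Xs) = K₂ * (K₁ * m + Xs) := by
        have : ((K₂ - 1) + 1) * (K₁ * m + Xs) = K₂ * (K₁ * m + Xs) := by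
          congr 1; omega
        rw [← this, add_mul, one_mul]
      have := i.isLt; omega
  have hdp : p.natDegree ≤ (K₁ * m + Xs - 1) + (K₂ * (K₁ * m + Xs) - 1) :=
    le_trans (natDegree_mul_le) (add_le_add hdA hdB)
  have hmon : (X ^ k - 1 : R[X]).Monic := by
    have := monic_X_pow_sub_C (1 : R) (show k ≠ 0 by omega)
    simpa using this
  rw [modByMonic_eq_sub_mul_div _ (X ^ k - 1), coeff_sub]
  have hzero : ((X ^ k - 1 : R[X]) * (p /ₘ (X ^ k - 1))).coeff n = 0 := by
    by_cases hcase : p.degree < (X ^ k - 1 : R[X]).degree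
    · rw [(divByMonic_eq_zero_iff hmon).mpr hcase, mul_zero, coeff_zero]
    · have hdq : (X ^ k - 1 : R[X]).degree = (k : ℕ) := by
        have := degree_X_pow_sub_C (show 0 < k by omega) (1 : R)
        simpa using this
      have hp0 : p ≠ 0 := by
        intro h0
        rw [h0, degree_zero, hdq] at hcase
        exact hcase (by exact_mod_cast WithBot.bot_lt_coe k)
      have hkle : k ≤ p.natDegree := by
        by_contra hlt
        exact hcase (hdq ▸ (natDegree_lt_iff_degree_lt hp0).mp  (by omega))
      have hdd : (p /ₘ (X ^ k - 1)).natDegree = p.natDegree - k := by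
        rw [natDegree_divByMonic p hmon]
        congr 1
        have := natDegree_X_pow_sub_C (n := k) (r := (1 : R))
        simpa using this
      rw [sub_mul, one_mul, coeff_sub, X_pow_mul, coeff_mul_X_pow',
        if_neg (by omega : ¬ k ≤ n),
        coeff_eq_zero_of_natDegree_lt (show (p /ₘ (X ^ k - 1)).natDegree < n by
          rw [hdd]
          have hP : 1 ≤ K₁ * m := Nat.one_le_iff_ne_zero.mpr (by positivity)
          omega),
        sub_zero]
  rw [hzero, sub_zero]
  exact coeff_prod_eq K₁ K₂ m Xs hK₁ hK₂ hm A B Rn T j k'
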